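/- Let a_1, ..., a_m ∈ ℝ^d, let S ⊆ {1,...,m}, and suppose there exist c ∈ ℝ^d and r > 0 such that ‖a_j - c‖ = r for all j ∈ S and ‖a_j - c‖ > r for all j ∉ S. Suppose y ∈ ℝ^d can be written as a convex combination of {a_j : j ∈ S}. Then every minimizer x* of Σ_j x_j ‖y - a_j‖² over the set {x ∈ ℝ^m : x_j ≥ 0, Σ_j x_j = 1, Σ_j x_j a_j = y} has support contained in S. -/

import Mathlib

open scoped RealInnerProductSpace

lemma aux_obj {d m : ℕ} (a : Fin m → EuclideanSpace ℝ (Fin d))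
    (c y : EuclideanSpace ℝ (Fin d)) (z : Fin m → ℝ)
    (h1 : ∑ j, z j = 1) (h2 : ∑ j, z j • a j = y) :
    ∑ j, z j * ‖y - a j‖ ^ 2 = ∑ j, z j * ‖a j - c‖ ^ 2 - ‖y - c‖ ^ 2 := by
  have key : ∀ j, z j * ‖y - a j‖ ^ 2 =
      z j * ‖y - c‖ ^ 2 - 2 * ⟪y - c, z j • (a j - c)⟫ + z j * ‖a j - c‖ ^ 2 := by
    intro j
    have : y - a j = (y - c) - (a j - c) := by abel
    rw [this, norm_sub_sq_real, real_inner_smul_right]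
    ring
  rw [Finset.sum_congr rfl (fun j _ => key j)]
  rw [Finset.sum_add_distrib, Finset.sum_sub_distrib, ← Finset.sum_mul,
    ← Finset.mul_sum, ← inner_sum, h1]
  have hs : ∑ j, z j • (a j - c) = y - c := by
    simp [smul_sub, Finset.sum_sub_distrib, h2, ← Finset.sum_smul, h1]
  rw [hs, real_inner_self_eq_norm_sq]
  ring

theorem stmt_2 {d m : ℕ} (a : Fin m → EuclideanSpace ℝ (Fin d))
    (S : Finset (Fin m)) (c : EuclideanSpace ℝ (Fin d)) (r : ℝ) (hr : 0 < r)
    (hin : ∀ j ∈ S, ‖a j - c‖ = r) (hout : ∀ j ∉ S, r < ‖a j - c‖)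
    (y : EuclideanSpace ℝ (Fin d))
    (hy : ∃ w : Fin m → ℝ, (∀ j, 0 ≤ w j) ∧ (∀ j, w j ≠ 0 → j ∈ S) ∧
      ∑ j, w j = 1 ∧ ∑ j, w j • a j = y)
    (x : Fin m → ℝ)
    (hx : (∀ j, 0 ≤ x j) ∧ ∑ j, x j = 1 ∧ ∑ j, x j • a j = y)
    (hmin : ∀ z : Fin m → ℝ, ((∀ j, 0 ≤ z j) ∧ ∑ j, z j = 1 ∧ ∑ j, z j • a j = y) →
      ∑ j, x j * ‖y - a j‖ ^ 2 ≤ ∑ j, z j * ‖y - a j‖ ^ 2) :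
    ∀ j, x j ≠ 0 → j ∈ S := by
  obtain ⟨w, hw0, hwS, hw1, hwy⟩ := hy
  obtain ⟨hx0, hx1, hxy⟩ := hx
  have hle := hmin w ⟨hw0, hw1, hwy⟩
  rw [aux_obj a c y x hx1 hxy, aux_obj a c y w hw1 hwy] at hle
  have hwr : ∑ j, w j * ‖a j - c‖ ^ 2 = r ^ 2 := by
    have : ∀ j, w j * ‖a j - c‖ ^ 2 = w j * r ^ 2 := by
      intro j
      by_cases h : w j = 0
      · simp [h]
      · rw [hin j (hwS j h)]
    rw [Finset.sum_congr rfl fun j _ => this j, ← Finset.sum_mul, hw1, one_mul]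
  have hxr : ∑ j, x j * ‖a j - c‖ ^ 2 ≤ r ^ 2 := by linarith
  have hsum0 : ∑ j, x j * (‖a j - c‖ ^ 2 - r ^ 2) ≤ 0 := by
    have : ∑ j, x j * (‖a j - c‖ ^ 2 - r ^ 2)
        = ∑ j, x j * ‖a j - c‖ ^ 2 - (∑ j, x j) * r ^ 2 := by
      rw [Finset.sum_mul, ← Finset.sum_sub_distrib]; ring_nf
      exact Finset.sum_congr rfl fun i _ => by ring
    rw [this, hx1, one_mul]; linarith
  intro j hj
  by_contra hjS
  have hpos : ∀ i, 0 ≤ x i * (‖a i - c‖ ^ 2 - r ^ 2) := by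
    intro i
    apply mul_nonneg (hx0 i)
    by_cases h : i ∈ S
    · rw [hin i h]; simp
    · have := hout i h
      nlinarith
  have hstrict : 0 < x j * (‖a j - c‖ ^ 2 - r ^ 2) := by
    have h1 : 0 < x j := lt_of_le_of_ne (hx0 j) (Ne.symm hj)
    have h2 := hout j hjS
    have h3 : 0 < ‖a j - c‖ ^ 2 - r ^ 2 := by nlinarith
    exact mul_pos h1 h3
  have : 0 < ∑ i, x i * (‖a i - c‖ ^ 2 - r ^ 2) :=
    Finset.sum_pos' (fun i _ => hpos i) ⟨j, Finset.mem_univ j, hstrict⟩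
  linarith
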